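/- Let 0 < a ≤ b be real numbers and let t₁, …, tₙ be real numbers (n ≥ 1) such that a ≤ exp(tᵢ) ≤ b for every i. Then log(∑_{i=1}^n exp(tᵢ)) ≤ (1/n) · ∑_{i=1}^n tᵢ + log n − log a − log b + 2 · log((a + b)/2). -/

import Mathlib

open Finset Real

/-- Corollary 1: upper bound on the log-sum-exp of logits `tᵢ` by their average plus
constants depending only on `n` and an interval `[a, b]` containing all `exp tᵢ`. -/
theorem log_sum_exp_upper_bound (a b : ℝ) (ha : 0 < a) (hab : a ≤ b) (n : ℕ) (hn : 1 ≤ n)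
    (t : Fin n → ℝ) (ht : ∀ i, a ≤ Real.exp (t i) ∧ Real.exp (t i) ≤ b) :
    Real.log (∑ i, Real.exp (t i)) ≤
      (1 / (n : ℝ)) * ∑ i, t i + Real.log n - Real.log a - Real.log b +
        2 * Real.log ((a + b) / 2) := by
  have hn0 : 0 < (n : ℝ) := by exact_mod_cast hn
  have hb : 0 < b := ha.trans_le hab
  have habpos : 0 < a + b := by linarith
  have hne : (Finset.univ : Finset (Fin n)).Nonempty :=
    Finset.univ_nonempty_iff.mpr (Fin.pos_iff_nonempty.mp hn)
  set S : ℝ := ∑ i, Real.exp (t i) with hSdef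
  set T : ℝ := ∑ i, a * b * Real.exp (-(t i)) with hTdef
  have hS : 0 < S := Finset.sum_pos (fun i _ => Real.exp_pos _) hne
  have hT : 0 < T :=
    Finset.sum_pos (fun i _ => mul_pos (mul_pos ha hb) (Real.exp_pos _)) hne
  -- S + T ≤ n * (a + b)
  have hST : S + T ≤ (n : ℝ) * (a + b) := by
    have heq : S + T = ∑ i, (Real.exp (t i) + a * b * Real.exp (-(t i))) := by
      rw [hSdef, hTdef, ← Finset.sum_add_distrib]
    rw [heq]
    calc ∑ i, (Real.exp (t i) + a * b * Real.exp (-(t i)))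
        ≤ ∑ _i : Fin n, (a + b) := by
          apply Finset.sum_le_sum
          intro i _
          obtain ⟨h1, h2⟩ := ht i
          have hx : 0 < Real.exp (t i) := Real.exp_pos _
          rw [Real.exp_neg]
          have key : Real.exp (t i) * Real.exp (t i) + a * b ≤ (a + b) * Real.exp (t i) := by
            nlinarith [mul_nonneg (sub_nonneg.mpr h1) (sub_nonneg.mpr h2)]
          calc Real.exp (t i) + a * b * (Real.exp (t i))⁻¹
              = (Real.exp (t i) * Real.exp (t i) + a * b) / Real.exp (t i) := by
                field_simp
            _ ≤ (a + b) * Real.exp (t i) / Real.exp (t i) := by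
                gcongr
            _ = a + b := by field_simp
      _ = (n : ℝ) * (a + b) := by rw [Finset.sum_const]; simp; ring
  -- S * T ≤ ((n*(a+b))/2)^2
  have hmul : S * T ≤ ((n : ℝ) * (a + b) / 2) ^ 2 := by
    nlinarith [sq_nonneg (S - T), sq_nonneg (S + T)]
  -- Jensen / AM-GM lower bound on T
  have hJ : (n : ℝ) * (a * b) * Real.exp (-((∑ i, t i) / n)) ≤ T := by
    have hgm := Real.geom_mean_le_arith_mean_weighted Finset.univ
      (fun _ : Fin n => 1 / (n : ℝ)) (fun i => Real.exp (-(t i)))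
      (fun i _ => by positivity) (by rw [Finset.sum_const, Finset.card_univ, Fintype.card_fin, nsmul_eq_mul]; exact mul_one_div_cancel hn0.ne') (fun i _ => (Real.exp_pos _).le)
    have hlhs : ∏ i : Fin n, Real.exp (-(t i)) ^ ((1 : ℝ) / n)
        = Real.exp (-((∑ i, t i) / n)) := by
      have hpow : ∀ i : Fin n, Real.exp (-(t i)) ^ ((1 : ℝ) / n)
          = Real.exp (-(t i) * (1 / n)) := by
        intro i
        rw [← Real.exp_log (Real.exp_pos (-(t i))), ← Real.exp_mul, Real.log_exp]
      rw [Finset.prod_congr rfl (fun i _ => hpow i), ← Real.exp_sum]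
      congr 1
      rw [← Finset.sum_mul, Finset.sum_neg_distrib]
      ring
    rw [hlhs] at hgm
    have hTeq : T = (a * b) * ∑ i, Real.exp (-(t i)) := by
      rw [hTdef, Finset.mul_sum]
    have h2 : ∑ i : Fin n, (1 / (n : ℝ)) * Real.exp (-(t i))
        = (1 / n) * ∑ i, Real.exp (-(t i)) := by rw [Finset.mul_sum]
    rw [h2] at hgm
    have hsum : (n : ℝ) * Real.exp (-((∑ i, t i) / n)) ≤ ∑ i, Real.exp (-(t i)) := by
      have h3 := mul_le_mul_of_nonneg_left hgm hn0.le
      have h4 : (n : ℝ) * ((1 / n) * ∑ i, Real.exp (-(t i))) = ∑ i, Real.exp (-(t i)) := by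
        field_simp
      linarith
    rw [hTeq]
    calc (n : ℝ) * (a * b) * Real.exp (-((∑ i, t i) / n))
        = (a * b) * ((n : ℝ) * Real.exp (-((∑ i, t i) / n))) := by ring
      _ ≤ (a * b) * ∑ i, Real.exp (-(t i)) :=
          mul_le_mul_of_nonneg_left hsum (mul_pos ha hb).le
  -- combine
  have hc : 0 < (n : ℝ) * (a + b) / 2 := div_pos (mul_pos hn0 habpos) two_pos
  have hSle : S ≤ ((n : ℝ) * (a + b) / 2) ^ 2 / T := by
    rw [le_div_iff₀ hT]; exact hmul
  have hlogS : Real.log S ≤ 2 * Real.log ((n : ℝ) * (a + b) / 2) - Real.log T := by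
    calc Real.log S ≤ Real.log (((n : ℝ) * (a + b) / 2) ^ 2 / T) :=
          Real.log_le_log hS hSle
      _ = 2 * Real.log ((n : ℝ) * (a + b) / 2) - Real.log T := by
          rw [Real.log_div (pow_ne_zero _ hc.ne') hT.ne', Real.log_pow]
          push_cast; ring
  have hlogT : Real.log n + Real.log a + Real.log b + (-((∑ i, t i) / n)) ≤ Real.log T := by
    have hll := Real.log_le_log (mul_pos (mul_pos hn0 (mul_pos ha hb)) (Real.exp_pos _)) hJ
    calc Real.log n + Real.log a + Real.log b + (-((∑ i, t i) / n))
        = Real.log ((n : ℝ) * (a * b) * Real.exp (-((∑ i, t i) / n))) := by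
          rw [Real.log_mul (mul_pos hn0 (mul_pos ha hb)).ne' (Real.exp_ne_zero _),
            Real.log_mul hn0.ne' (mul_pos ha hb).ne',
            Real.log_mul ha.ne' hb.ne', Real.log_exp]
          ring
      _ ≤ Real.log T := hll
  have hsplit : Real.log ((n : ℝ) * (a + b) / 2)
      = Real.log n + Real.log ((a + b) / 2) := by
    rw [mul_div_assoc, Real.log_mul hn0.ne' (div_pos habpos two_pos).ne']
  have havg : (1 / (n : ℝ)) * ∑ i, t i = (∑ i, t i) / n := by ring
  rw [havg]
  linarith [hlogS, hlogT]
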